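/- arXiv:1907.11470 — 2 statements merged into one kernel-verified Lean document; each statement's English description precedes it below -/
import Mathlib

section
/- Let R(λ) = ∫₀^∞ e^{−λt} C_{γ,δ}(t) dt, existing for λ ≥ λ₀, where C_{γ,δ}(t) is a general fractional cosine operator function of order γ ∈ (1,2) and type δ ∈ [0,1]. Then for λ, μ ≥ λ₀, λ^{1−δ(2−γ)} R(μ) − μ^{1−δ(2−γ)} R(λ) = (λ^γ − μ^γ) R(μ) R(λ). -/
open MeasureTheory Filter Topology

/-- Riemann–Liouville fractional integral of order `α` of a vector-valued function. -/
noncomputable def RLv {X : Type*} [NormedAddCommGroup X] [NormedSpace ℝ X] (α : ℝ)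
    (f : ℝ → X) (t : ℝ) : X :=
  (Real.Gamma α)⁻¹ • ∫ s in (0:ℝ)..t, (t - s) ^ (α - 1) • f s

/-- A general fractional cosine operator function of order `γ ∈ (1,2)` and type `δ ∈ [0,1]`:
strong continuity on `(0,∞)`, the limit condition at `0+`, commutativity, and the
functional equation (iv). -/
structure GenFracCosine {X : Type*} [NormedAddCommGroup X] [NormedSpace ℝ X]
    (γ δ : ℝ) (C : ℝ → X →L[ℝ] X) : Prop where
  strongCont : ∀ x : X, ContinuousOn (fun t => C t x) (Set.Ioi 0)
  limit : ∀ x : X, Filter.Tendsto (fun t : ℝ => (t ^ (γ + δ * (2 - γ) - 2))⁻¹ • C t x)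
      (𝓝[>] (0:ℝ)) (𝓝 ((Real.Gamma (γ + δ * (2 - γ) - 1))⁻¹ • x))
  comm : ∀ t s : ℝ, 0 < t → 0 < s → ∀ x : X, C t (C s x) = C s (C t x)
  funEq : ∀ t s : ℝ, 0 < t → 0 < s → ∀ x : X,
    C s (RLv γ (fun τ => C τ x) t) - RLv γ (fun τ => C τ (C t x)) s
      = (s ^ (γ + δ * (2 - γ) - 2) / Real.Gamma (γ + δ * (2 - γ) - 1)) •
          RLv γ (fun τ => C τ x) t
        - (t ^ (γ + δ * (2 - γ) - 2) / Real.Gamma (γ + δ * (2 - γ) - 1)) •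
          RLv γ (fun τ => C τ x) s

/-- `InGen γ δ C x y` means `x ∈ D(A)` and `A x = y`, where `A` is the generator of the
general fractional cosine operator function `C`. -/
def InGen {X : Type*} [NormedAddCommGroup X] [NormedSpace ℝ X]
    (γ δ : ℝ) (C : ℝ → X →L[ℝ] X) (x y : X) : Prop :=
  Filter.Tendsto (fun t : ℝ => Real.Gamma (2 * γ + δ * (2 - γ) - 1) •
      (t ^ (2 * γ + δ * (2 - γ) - 2))⁻¹ •
        (C t x - (t ^ (γ + δ * (2 - γ) - 2) / Real.Gamma (γ + δ * (2 - γ) - 1)) • x))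
    (𝓝[>] (0:ℝ)) (𝓝 y)

section Aux

open Set Convolution
open scoped NNReal ENNReal

variable {X : Type*} [NormedAddCommGroup X] [NormedSpace ℝ X]

/-- Separately continuous-in-the-first-variable functions that are a.e. strongly measurable in
the second variable are jointly a.e. strongly measurable on `(0,∞) × (0,∞)`. -/
lemma jointAESM (F : ℝ → ℝ → X)
    (hc : ∀ s : ℝ, ContinuousOn (fun t => F t s) (Set.Ioi 0))
    (hm : ∀ u : ℝ, 0 < u → AEStronglyMeasurable (F u) (volume.restrict (Set.Ioi 0))) :
    AEStronglyMeasurable (fun p : ℝ × ℝ => F p.1 p.2)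
      ((volume.restrict (Set.Ioi 0)).prod (volume.restrict (Set.Ioi 0))) := by
  classical
  set ν : Measure ℝ := volume.restrict (Set.Ioi 0) with hν
  have hu : ∀ n k : ℕ, (0:ℝ) < ((k:ℝ)+1) / 2^n := by intro n k; positivity
  set G : ℕ → ℕ → ℝ → X := fun n k => (hm (((k:ℝ)+1)/2^n) (hu n k)).mk _ with hG
  have hGsm : ∀ (n k : ℕ), StronglyMeasurable (G n k) :=
    fun n k => (hm (((k:ℝ)+1)/2^n) (hu n k)).stronglyMeasurable_mk
  have hGae : ∀ (n k : ℕ), ∀ᵐ s ∂ν, F (((k:ℝ)+1)/2^n) s = G n k s :=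
    fun n k => (hm (((k:ℝ)+1)/2^n) (hu n k)).ae_eq_mk
  set f' : ℕ → ℝ × ℝ → X := fun n p => if 0 ≤ p.1 then G n ⌊p.1 * 2^n⌋₊ p.2 else 0 with hf'
  have hf'sm : ∀ n, StronglyMeasurable (f' n) := by
    intro n
    set S : ℕ → ℝ × ℝ → X := fun m p => ∑ k ∈ Finset.range m,
      Set.indicator ((Set.Ico ((k:ℝ)/2^n) (((k:ℝ)+1)/2^n)) ×ˢ (Set.univ : Set ℝ))
        (fun q => G n k q.2) p with hS
    have hSsm : ∀ m, StronglyMeasurable (S m) := by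
      intro m
      refine Finset.stronglyMeasurable_fun_sum _ (fun k _ => ?_)
      exact ((hGsm n k).comp_measurable measurable_snd).indicator
        (measurableSet_Ico.prod MeasurableSet.univ)
    refine stronglyMeasurable_of_tendsto atTop hSsm ?_
    rw [tendsto_pi_nhds]
    intro p
    by_cases hp : 0 ≤ p.1
    · have h2n : (0:ℝ) < 2^n := by positivity
      set k₀ := ⌊p.1 * 2^n⌋₊ with hk₀
      have hmem : p.1 ∈ Set.Ico ((k₀:ℝ)/2^n) (((k₀:ℝ)+1)/2^n) := by
        constructor
        · rw [div_le_iff₀ h2n]; exact Nat.floor_le (by positivity)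
        · rw [lt_div_iff₀ h2n]; exact Nat.lt_floor_add_one _
      have hev : ∀ m, k₀ < m → S m p = f' n p := by
        intro m hm'
        have : ∀ k ∈ Finset.range m, k ≠ k₀ →
            Set.indicator ((Set.Ico ((k:ℝ)/2^n) (((k:ℝ)+1)/2^n)) ×ˢ (Set.univ : Set ℝ))
              (fun q => G n k q.2) p = 0 := by
          intro k _ hk
          apply Set.indicator_of_notMem
          rintro ⟨⟨h1, h2⟩, -⟩
          apply hk
          have h1' : (k:ℝ) ≤ p.1 * 2^n := by rwa [div_le_iff₀ h2n] at h1
          have h2' : p.1 * 2^n < (k:ℝ)+1 := by rwa [lt_div_iff₀ h2n] at h2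
          symm
          rw [hk₀, Nat.floor_eq_iff (by positivity)]
          exact ⟨by exact_mod_cast h1', by exact_mod_cast h2'⟩
        simp only [hS, hf']
        rw [Finset.sum_eq_single_of_mem k₀ (Finset.mem_range.2 hm') this,
          Set.indicator_of_mem (by exact ⟨hmem, Set.mem_univ _⟩), if_pos hp]
      have : ∀ᶠ m in atTop, S m p = f' n p :=
        eventually_atTop.2 ⟨k₀ + 1, fun m hm' => hev m (Nat.lt_of_succ_le hm')⟩
      exact Tendsto.congr' (this.mono fun m h => h.symm) tendsto_const_nhds
    · have : ∀ m, S m p = f' n p := by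
        intro m
        simp only [hf', hS]
        rw [if_neg hp]
        refine Finset.sum_eq_zero fun k _ => ?_
        apply Set.indicator_of_notMem
        rintro ⟨⟨h1, -⟩, -⟩
        exact hp (le_trans (by positivity) h1)
      simp only [this]
      exact tendsto_const_nhds (x := f' n p)
  have hν0 : ν {t : ℝ | t ≤ 0} = 0 := by
    rw [hν, Measure.restrict_apply' measurableSet_Ioi]
    have he : {t : ℝ | t ≤ 0} ∩ Set.Ioi 0 = ∅ := by
      ext t; simp only [Set.mem_inter_iff, Set.mem_setOf_eq, Set.mem_Ioi,
        Set.mem_empty_iff_false, iff_false]; rintro ⟨h1, h2⟩; linarith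
    simp [he]
  have key : ∀ n : ℕ, AEStronglyMeasurable
      (fun p : ℝ × ℝ => F ((⌊p.1 * 2^n⌋₊ + 1 : ℝ)/2^n) p.2) (ν.prod ν) := by
    intro n
    refine ⟨f' n, hf'sm n, ?_⟩
    choose N hNsub hNmeas hNnull using fun k : ℕ =>
      exists_measurable_superset_of_null ((ae_iff.1 (hGae n k)))
    have hbad : {p : ℝ × ℝ | F ((⌊p.1 * 2^n⌋₊ + 1 : ℝ)/2^n) p.2 ≠ f' n p} ⊆
        ({t : ℝ | t ≤ 0} ×ˢ (Set.univ : Set ℝ)) ∪ ⋃ k : ℕ, (Set.univ : Set ℝ) ×ˢ N k := by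
      intro p hp'
      by_contra hcon
      simp only [Set.mem_union, Set.mem_prod, Set.mem_iUnion, not_or, not_exists] at hcon
      obtain ⟨h1, h2⟩ := hcon
      have hp1 : 0 < p.1 := by
        by_contra h
        exact h1 ⟨by simpa using not_lt.1 h, Set.mem_univ _⟩
      have hp2 : p.2 ∉ N ⌊p.1 * 2^n⌋₊ := fun h => h2 ⌊p.1 * 2^n⌋₊ ⟨Set.mem_univ _, h⟩
      have heq : F ((⌊p.1 * 2^n⌋₊ + 1 : ℝ)/2^n) p.2 = G n ⌊p.1 * 2^n⌋₊ p.2 := by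
        by_contra hne
        exact hp2 (hNsub ⌊p.1 * 2^n⌋₊ (by push_cast; exact hne))
      refine hp' ?_
      rw [heq]
      simp only [hf']
      rw [if_pos hp1.le]
    refine measure_mono_null hbad (measure_union_null ?_ ?_)
    · rw [Measure.prod_prod, hν0, zero_mul]
    · refine measure_iUnion_null fun k => ?_
      rw [Measure.prod_prod, hNnull k, mul_zero]
  refine aestronglyMeasurable_of_tendsto_ae atTop key ?_
  have hae : ∀ᵐ p : ℝ × ℝ ∂(ν.prod ν), 0 < p.1 := by
    rw [ae_iff]
    refine measure_mono_null (fun p hp => ?_)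
      (show (ν.prod ν) ({t : ℝ | t ≤ 0} ×ˢ (Set.univ : Set ℝ)) = 0 from ?_)
    · simp only [Set.mem_setOf_eq, not_lt] at hp
      exact ⟨hp, Set.mem_univ _⟩
    · rw [Measure.prod_prod, hν0, zero_mul]
  filter_upwards [hae] with p hp
  have h2n : ∀ n : ℕ, (0:ℝ) < 2^n := fun n => by positivity
  have hgt : ∀ n : ℕ, p.1 < (⌊p.1 * 2^n⌋₊ + 1 : ℝ)/2^n := by
    intro n; rw [lt_div_iff₀ (h2n n)]; exact Nat.lt_floor_add_one _
  have hle : ∀ n : ℕ, (⌊p.1 * 2^n⌋₊ + 1 : ℝ)/2^n ≤ p.1 + 1/2^n := by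
    intro n
    rw [div_le_iff₀ (h2n n), add_mul, one_div, inv_mul_cancel₀ (h2n n).ne']
    have := Nat.floor_le (a := p.1 * 2^n) (by positivity)
    linarith
  have htendsto : Tendsto (fun n : ℕ => (⌊p.1 * 2^n⌋₊ + 1 : ℝ)/2^n) atTop (𝓝[>] p.1) := by
    rw [tendsto_nhdsWithin_iff]
    constructor
    · have h1 : Tendsto (fun n : ℕ => p.1 + 1/2^n) atTop (𝓝 p.1) := by
        have : Tendsto (fun n : ℕ => (1:ℝ)/2^n) atTop (𝓝 0) := by
          simpa [one_div, Function.comp_def] using tendsto_inv_atTop_zero.comp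
            (tendsto_pow_atTop_atTop_of_one_lt (by norm_num : (1:ℝ) < 2))
        simpa using tendsto_const_nhds.add this
      exact tendsto_of_tendsto_of_tendsto_of_le_of_le tendsto_const_nhds h1
        (fun n => (hgt n).le) hle
    · exact Eventually.of_forall fun n => Set.mem_Ioi.2 (hgt n)
  have hcwa : ContinuousWithinAt (fun t => F t p.2) (Set.Ioi 0) p.1 := hc p.2 p.1 hp
  refine hcwa.tendsto.comp (htendsto.mono_right ?_)
  exact nhdsWithin_mono _ (Set.Ioi_subset_Ioi hp.le)

/-- Uniform boundedness of the Laplace-type seminorms `y ↦ ∫ e^{-lt} ‖C t y‖`. -/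
lemma laplace_norm_bound [CompleteSpace X] (C : ℝ → X →L[ℝ] X)
    (hcont : ∀ x : X, ContinuousOn (fun t => C t x) (Set.Ioi 0))
    (l : ℝ) (hl : 0 < l)
    (hint : ∀ y : X, IntegrableOn (fun t : ℝ => Real.exp (-l * t) • C t y) (Set.Ioi 0)) :
    ∃ c : ℝ, 0 < c ∧ ∀ y : X, ∫ t in Set.Ioi (0:ℝ), Real.exp (-l * t) * ‖C t y‖ ≤ c * ‖y‖ := by
  classical
  set g : X → ℝ → ℝ := fun y t => Real.exp (-l * t) * ‖C t y‖ with hg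
  have hgnn : ∀ y t, 0 ≤ g y t := fun y t => by positivity
  have hgint : ∀ y, IntegrableOn (g y) (Set.Ioi 0) := by
    intro y
    refine IntegrableOn.congr_fun (hint y).norm (fun t _ => ?_) measurableSet_Ioi
    rw [norm_smul, Real.norm_eq_abs, abs_of_pos (Real.exp_pos _)]
  set q : Seminorm ℝ X := Seminorm.of (fun y => ∫ t in Set.Ioi (0:ℝ), g y t)
    (by
      intro y z
      rw [← integral_add (hgint y) (hgint z)]
      refine setIntegral_mono_on (hgint _) ((hgint y).add (hgint z)) measurableSet_Ioi ?_
      intro t _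
      simp only [hg]
      rw [← mul_add]
      exact mul_le_mul_of_nonneg_left ((C t).map_add y z ▸ norm_add_le _ _) (Real.exp_pos _).le)
    (by
      intro a y
      simp only [hg]
      rw [← integral_const_mul]
      congr 1 with t
      rw [(C t).map_smul, norm_smul]
      ring) with hqdef
  have hIccsub : ∀ n : ℕ, Set.Icc (((n:ℝ)+1)⁻¹) ((n:ℝ)+1) ⊆ Set.Ioi 0 := by
    intro n t ht
    exact lt_of_lt_of_le (by positivity) ht.1
  have hgintIcc : ∀ y (n : ℕ), IntegrableOn (g y) (Set.Icc (((n:ℝ)+1)⁻¹) ((n:ℝ)+1)) :=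
    fun y n => (hgint y).mono_set (hIccsub n)
  set qn : ℕ → Seminorm ℝ X := fun n => Seminorm.of
    (fun y => ∫ t in Set.Icc (((n:ℝ)+1)⁻¹) ((n:ℝ)+1), g y t)
    (by
      intro y z
      rw [← integral_add (hgintIcc y n) (hgintIcc z n)]
      refine setIntegral_mono_on (hgintIcc _ n) ((hgintIcc y n).add (hgintIcc z n))
        measurableSet_Icc ?_
      intro t _
      simp only [hg]
      rw [← mul_add]
      exact mul_le_mul_of_nonneg_left ((C t).map_add y z ▸ norm_add_le _ _) (Real.exp_pos _).le)
    (by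
      intro a y
      simp only [hg]
      rw [← integral_const_mul]
      congr 1 with t
      rw [(C t).map_smul, norm_smul]
      ring) with hqndef
  have hqn_le : ∀ (n : ℕ) (y : X), qn n y ≤ q y := by
    intro n y
    exact setIntegral_mono_set (hgint y) (Eventually.of_forall fun t => hgnn y t)
      (HasSubset.Subset.eventuallyLE (hIccsub n))
  have hqn_cont : ∀ n : ℕ, Continuous (qn n) := by
    intro n
    set a : ℝ := ((n:ℝ)+1)⁻¹ with ha
    set b : ℝ := ((n:ℝ)+1) with hb
    have hpb : ∀ y : X, ∃ K, ∀ t : Set.Icc a b, ‖C (t:ℝ) y‖ ≤ K := by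
      intro y
      obtain ⟨K, hK⟩ := (isCompact_Icc (a := a) (b := b)).exists_bound_of_continuousOn
        ((hcont y).mono (hIccsub n))
      exact ⟨K, fun t => hK t t.2⟩
    obtain ⟨K, hK⟩ := banach_steinhaus hpb
    set K' : ℝ := max K 0 with hK'
    have hKnn : ∀ t : Set.Icc a b, ‖C (t:ℝ)‖ ≤ K' := fun t => (hK t).trans (le_max_left _ _)
    set cc : ℝ≥0 := ⟨(volume (Set.Icc a b)).toReal * K',
      mul_nonneg ENNReal.toReal_nonneg (le_max_right _ _)⟩ with hcc
    have hle : qn n ≤ cc • normSeminorm ℝ X := by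
      intro y
      have hbd : ∀ t ∈ Set.Icc a b, g y t ≤ K' * ‖y‖ := by
        intro t ht
        have h1 : Real.exp (-l * t) ≤ 1 := by
          rw [Real.exp_le_one_iff]
          have : 0 < t := hIccsub n ht
          nlinarith
        have h2 : ‖C t y‖ ≤ K' * ‖y‖ := by
          refine le_trans ((C t).le_opNorm y) ?_
          exact mul_le_mul_of_nonneg_right (hKnn ⟨t, ht⟩) (norm_nonneg _)
        calc g y t ≤ 1 * ‖C t y‖ :=
              mul_le_mul_of_nonneg_right h1 (norm_nonneg _)
          _ = ‖C t y‖ := one_mul _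
          _ ≤ K' * ‖y‖ := h2
      have : qn n y ≤ ∫ _t in Set.Icc a b, K' * ‖y‖ :=
        setIntegral_mono_on (hgintIcc y n)
          (integrableOn_const measure_Icc_lt_top.ne) measurableSet_Icc hbd
      rw [setIntegral_const] at this
      refine this.trans (le_of_eq ?_)
      rw [hcc]
      simp only [Seminorm.smul_apply, coe_normSeminorm, NNReal.smul_def, NNReal.coe_mk,
        smul_eq_mul, measureReal_def]
      rw [← mul_assoc]; rfl
    refine Seminorm.continuous_of_le ?_ hle
    have : ⇑(cc • normSeminorm ℝ X) = fun y => (cc : ℝ) * ‖y‖ := by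
      ext y; simp [Seminorm.smul_apply, NNReal.smul_def]
    rw [this]
    exact continuous_const.mul continuous_norm
  have hbdd_pt : ∀ y : X, BddAbove (Set.range fun n => qn n y) := by
    intro y
    exact ⟨q y, by rintro _ ⟨n, rfl⟩; exact hqn_le n y⟩
  have hbdd : BddAbove (Set.range qn) := Seminorm.bddAbove_range_iff.mpr hbdd_pt
  have hcontSup : Continuous ⇑(⨆ n, qn n) := by
    rw [Seminorm.coe_iSup_eq hbdd]
    exact Seminorm.continuous_iSup qn hqn_cont hbdd
  obtain ⟨c, hc, hcb⟩ := Seminorm.bound_of_continuous_normedSpace _ hcontSup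
  refine ⟨c, hc, fun y => ?_⟩
  have hmono : Monotone (fun n : ℕ => Set.Icc (((n:ℝ)+1)⁻¹) ((n:ℝ)+1)) := by
    intro n m hnm
    have h1 : ((n:ℝ)+1) ≤ ((m:ℝ)+1) := by exact_mod_cast Nat.succ_le_succ hnm
    exact Set.Icc_subset_Icc (inv_anti₀ (by positivity) h1) h1
  have hunion : (⋃ n : ℕ, Set.Icc (((n:ℝ)+1)⁻¹) ((n:ℝ)+1)) = Set.Ioi 0 := by
    ext t
    simp only [Set.mem_iUnion, Set.mem_Ioi]
    constructor
    · rintro ⟨n, ht⟩; exact hIccsub n ht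
    · intro ht
      obtain ⟨n, hn⟩ := exists_nat_ge (max t⁻¹ t)
      refine ⟨n, ?_, ?_⟩
      · have h1 : t⁻¹ ≤ (n:ℝ)+1 := le_trans (le_trans (le_max_left _ _) hn) (by linarith)
        calc (((n:ℝ)+1))⁻¹ ≤ (t⁻¹)⁻¹ := inv_anti₀ (by positivity) h1
          _ = t := inv_inv t
      · exact le_trans (le_trans (le_max_right _ _) hn) (by linarith)
  have htend := tendsto_setIntegral_of_monotone (fun n : ℕ => measurableSet_Icc) hmono
    (hunion ▸ hgint y)
  rw [hunion] at htend
  have h1 : q y ≤ ⨆ n, qn n y :=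
    le_of_tendsto htend (Eventually.of_forall fun n => le_ciSup (hbdd_pt y) n)
  have h2 : (⨆ n, qn n) y = ⨆ n, qn n y := by
    rw [Seminorm.coe_iSup_eq hbdd]
    exact iSup_apply
  calc (∫ t in Set.Ioi (0:ℝ), Real.exp (-l * t) * ‖C t y‖) = q y := rfl
    _ ≤ ⨆ n, qn n y := h1
    _ = (⨆ n, qn n) y := h2.symm
    _ ≤ c * ‖y‖ := hcb y

lemma exp_rpow_integrableOn {a l : ℝ} (ha : -1 < a) (hl : 0 < l) :
    IntegrableOn (fun t : ℝ => Real.exp (-l * t) * t ^ a) (Set.Ioi 0) := by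
  have := integrableOn_rpow_mul_exp_neg_mul_rpow ha one_pos hl
  refine this.congr_fun (fun t ht => ?_) measurableSet_Ioi
  dsimp only
  rw [Real.rpow_one, mul_comm]

lemma exp_rpow_integral {a l : ℝ} (ha : 0 < a) (hl : 0 < l) :
    ∫ t in Set.Ioi (0:ℝ), Real.exp (-l * t) * t ^ (a - 1) = Real.Gamma a * l ^ (-a) := by
  have := Real.integral_rpow_mul_exp_neg_mul_Ioi ha hl
  rw [show (∫ t in Set.Ioi (0:ℝ), Real.exp (-l * t) * t ^ (a-1))
      = ∫ t in Set.Ioi (0:ℝ), t ^ (a-1) * Real.exp (-(l * t)) by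
    refine setIntegral_congr_fun measurableSet_Ioi (fun t ht => ?_)
    rw [neg_mul, mul_comm], this, one_div, Real.inv_rpow hl.le, Real.rpow_neg hl.le]
  ring

/-- The Laplace transform of the Riemann–Liouville integral of `g` is `l^{-γ}` times the
Laplace transform of `g`. -/
lemma conv_laplace [CompleteSpace X] {γ : ℝ} (hγ0 : 0 < γ) {l : ℝ} (hl : 0 < l) (g : ℝ → X)
    (hint : IntegrableOn (fun t : ℝ => Real.exp (-l * t) • g t) (Set.Ioi 0)) :
    IntegrableOn (fun s : ℝ => Real.exp (-l * s) • RLv γ g s) (Set.Ioi 0) ∧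
    ∫ s in Set.Ioi (0:ℝ), Real.exp (-l * s) • RLv γ g s
      = l ^ (-γ) • ∫ t in Set.Ioi (0:ℝ), Real.exp (-l * t) • g t := by
  classical
  have hΓ : 0 < Real.Gamma γ := Real.Gamma_pos_of_pos hγ0
  set k : ℝ → ℝ := Set.indicator (Set.Ioi 0) (fun u => Real.exp (-l * u) * u ^ (γ - 1)) with hk
  set h : ℝ → X := Set.indicator (Set.Ioi 0) (fun τ => Real.exp (-l * τ) • g τ) with hh
  have hk_int : Integrable k := by
    rw [hk, integrable_indicator_iff measurableSet_Ioi]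
    exact exp_rpow_integrableOn (by linarith) hl
  have hh_int : Integrable h := by
    rw [hh, integrable_indicator_iff measurableSet_Ioi]
    exact hint
  set L : ℝ →L[ℝ] X →L[ℝ] X := ContinuousLinearMap.lsmul ℝ ℝ with hL
  have hconv_pos : ∀ s : ℝ, 0 < s →
      (k ⋆[L] h) s = (Real.Gamma γ * Real.exp (-l * s)) • RLv γ g s := by
    intro s hs
    have h1 : (k ⋆[L] h) s = ∫ u : ℝ, k (s - u) • h u := by
      rw [convolution_def]
      have := MeasureTheory.integral_sub_left_eq_self
        (fun τ : ℝ => k (s - τ) • h τ) (μ := volume) s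
      rw [← this]
      congr 1 with τ
      simp [sub_sub_cancel, hL]
    rw [h1]
    have h2 : (fun u : ℝ => k (s - u) • h u)
        = Set.indicator (Set.Ioo 0 s) (fun u => Real.exp (-l * s) • ((s - u) ^ (γ-1) • g u)) := by
      ext u
      by_cases hu1 : 0 < u
      · by_cases hu2 : u < s
        · rw [Set.indicator_of_mem (Set.mem_Ioo.2 ⟨hu1, hu2⟩)]
          rw [hk, hh, Set.indicator_of_mem (Set.mem_Ioi.2 (by linarith : (0:ℝ) < s - u)),
            Set.indicator_of_mem (Set.mem_Ioi.2 hu1)]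
          rw [smul_smul, smul_smul]
          congr 1
          rw [mul_right_comm, ← Real.exp_add]
          congr 1
          ring
        · rw [Set.indicator_of_notMem (fun hmem => hu2 hmem.2)]
          rw [hk, Set.indicator_of_notMem (by simp only [Set.mem_Ioi]; linarith [not_lt.1 hu2])]
          simp
      · rw [Set.indicator_of_notMem (fun hmem => hu1 hmem.1)]
        rw [hh, Set.indicator_of_notMem (by simpa using not_lt.1 hu1)]
        simp
    rw [h2, integral_indicator measurableSet_Ioo, integral_smul]
    rw [RLv, intervalIntegral.integral_of_le hs.le, ← integral_Ioc_eq_integral_Ioo]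
    rw [smul_smul]
    congr 1
    field_simp
  have hconv_neg : ∀ s : ℝ, s ≤ 0 → (k ⋆[L] h) s = 0 := by
    intro s hs
    rw [convolution_def]
    have : (fun τ : ℝ => L (k τ) (h (s - τ))) = fun _ => 0 := by
      ext τ
      by_cases hτ : 0 < τ
      · have : h (s - τ) = 0 := Set.indicator_of_notMem (by simp only [Set.mem_Ioi]; linarith) _
        simp [this]
      · have : k τ = 0 := Set.indicator_of_notMem (by simpa using not_lt.1 hτ) _
        simp [this]
    rw [this]
    simp
  have hconv_int : Integrable (k ⋆[L] h) := hk_int.integrable_convolution L hh_int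
  constructor
  · have h1 : IntegrableOn (k ⋆[L] h) (Set.Ioi 0) := hconv_int.integrableOn
    have h2 : IntegrableOn (fun s => (Real.Gamma γ * Real.exp (-l * s)) • RLv γ g s)
        (Set.Ioi 0) := h1.congr_fun (fun s hs => hconv_pos s hs) measurableSet_Ioi
    have h3 := h2.smul ((Real.Gamma γ)⁻¹)
    refine IntegrableOn.congr_fun h3 (fun s _ => ?_) measurableSet_Ioi
    simp only [Pi.smul_apply]
    rw [smul_smul, ← mul_assoc, inv_mul_cancel₀ hΓ.ne', one_mul]
  · have hI := integral_convolution L hk_int hh_int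
    have hLHS : ∫ s, (k ⋆[L] h) s = ∫ s in Set.Ioi (0:ℝ), (k ⋆[L] h) s := by
      rw [← setIntegral_eq_integral_of_forall_compl_eq_zero (fun s hs => ?_)]
      exact hconv_neg s (by simpa using hs)
    have hk_val : ∫ u, k u = Real.Gamma γ * l ^ (-γ) := by
      rw [hk, integral_indicator measurableSet_Ioi]
      exact exp_rpow_integral hγ0 hl
    have hh_val : ∫ u, h u = ∫ t in Set.Ioi (0:ℝ), Real.exp (-l * t) • g t := by
      rw [hh, integral_indicator measurableSet_Ioi]
    have hmain : ∫ s in Set.Ioi (0:ℝ), (k ⋆[L] h) s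
        = (Real.Gamma γ * l ^ (-γ)) • ∫ t in Set.Ioi (0:ℝ), Real.exp (-l * t) • g t := by
      rw [← hLHS, hI, hk_val, hh_val]
      simp [hL]
    have hsub : ∫ s in Set.Ioi (0:ℝ), (k ⋆[L] h) s
        = Real.Gamma γ • ∫ s in Set.Ioi (0:ℝ), Real.exp (-l * s) • RLv γ g s := by
      rw [← integral_smul]
      refine setIntegral_congr_fun measurableSet_Ioi (fun s hs => ?_)
      rw [hconv_pos s hs, smul_smul]
    rw [hsub] at hmain
    have h6 := congrArg (fun z => (Real.Gamma γ)⁻¹ • z) hmain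
    simp only [smul_smul] at h6
    rw [inv_mul_cancel₀ hΓ.ne', one_smul,
      show (Real.Gamma γ)⁻¹ * (Real.Gamma γ * l ^ (-γ)) = l ^ (-γ) by field_simp] at h6
    exact h6

end Aux

theorem stmt14 {X : Type*} [NormedAddCommGroup X] [NormedSpace ℝ X] [CompleteSpace X]
    (γ δ : ℝ) (hγ1 : 1 < γ) (hγ2 : γ < 2) (hδ0 : 0 ≤ δ) (hδ1 : δ ≤ 1)
    (C : ℝ → X →L[ℝ] X) (hC : GenFracCosine γ δ C)
    (lam0 : ℝ) (hlam0 : 0 < lam0)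
    (hint : ∀ l : ℝ, lam0 ≤ l →
      ∀ x : X, IntegrableOn (fun t : ℝ => Real.exp (-l * t) • C t x) (Set.Ioi 0)) :
    ∀ l μ : ℝ, lam0 ≤ l → lam0 ≤ μ → ∀ x : X,
      l ^ (1 - δ * (2 - γ)) • (∫ t in Set.Ioi (0:ℝ), Real.exp (-μ * t) • C t x)
        - μ ^ (1 - δ * (2 - γ)) • (∫ t in Set.Ioi (0:ℝ), Real.exp (-l * t) • C t x)
      = (l ^ γ - μ ^ γ) •
          ∫ s in Set.Ioi (0:ℝ), Real.exp (-μ * s) •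
            C s (∫ t in Set.Ioi (0:ℝ), Real.exp (-l * t) • C t x) := by
  intro l μ hll hlμ x
  have hl0 : 0 < l := lt_of_lt_of_le hlam0 hll
  have hμ0 : 0 < μ := lt_of_lt_of_le hlam0 hlμ
  have hγ0 : 0 < γ := by linarith
  set β : ℝ := γ + δ * (2 - γ) with hβ
  have hβ1 : (1:ℝ) < β := by nlinarith
  have hβm : (-1:ℝ) < β - 2 := by nlinarith
  have hβ1' : (0:ℝ) < β - 1 := by linarith
  have hΓβ : 0 < Real.Gamma (β - 1) := Real.Gamma_pos_of_pos hβ1'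
  set ν : Measure ℝ := volume.restrict (Set.Ioi 0) with hν
  have hmeasC : ∀ y : X, AEStronglyMeasurable (fun t => C t y) ν :=
    fun y => (hC.strongCont y).aestronglyMeasurable measurableSet_Ioi
  -- near-zero bound
  have hnear : ∀ y : X, ∃ ε > (0:ℝ), ∃ M : ℝ, 0 ≤ M ∧
      ∀ t ∈ Set.Ioo (0:ℝ) ε, ‖C t y‖ ≤ M * t ^ (β - 2) := by
    intro y
    have hlim := (hC.limit y).norm
    rw [← hβ] at hlim
    set B : ℝ := ‖(Real.Gamma (β - 1))⁻¹ • y‖ with hB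
    have hb : ∀ᶠ t in 𝓝[>] (0:ℝ), ‖(t ^ (β - 2))⁻¹ • C t y‖ ≤ B + 1 :=
      hlim.eventually_le_const (by linarith)
    obtain ⟨u, hu, hsub⟩ := mem_nhdsGT_iff_exists_Ioo_subset.1 hb
    refine ⟨u, hu, B + 1, by positivity, fun t ht => ?_⟩
    have htp : (0:ℝ) < t ^ (β - 2) := Real.rpow_pos_of_pos ht.1 _
    have h1 := hsub ht
    rw [Set.mem_setOf_eq, norm_smul, Real.norm_eq_abs, abs_of_pos (inv_pos.2 htp),
      inv_mul_le_iff₀ htp] at h1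
    calc ‖C t y‖ ≤ t ^ (β - 2) * (B + 1) := h1
      _ = (B + 1) * t ^ (β - 2) := mul_comm _ _
  -- interval integrability of the RL integrand
  have hII : ∀ (y : X) (s : ℝ), 0 < s →
      IntervalIntegrable (fun τ => (s - τ) ^ (γ - 1) • C τ y) volume 0 s := by
    intro y s hs
    obtain ⟨ε₀, hε₀, M, hM0, hM⟩ := hnear y
    set ε : ℝ := min (ε₀ / 2) (s / 2) with hε
    have hε0 : 0 < ε := lt_min (by linarith) (by linarith)
    have hεs : ε < s := lt_of_le_of_lt (min_le_right _ _) (by linarith)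
    have hεε : ε < ε₀ := lt_of_le_of_lt (min_le_left _ _) (by linarith)
    have hχ : Continuous (fun τ : ℝ => (s - τ) ^ (γ - 1)) :=
      (continuous_const.sub continuous_id).rpow_const (fun τ => Or.inr (by linarith))
    have hpiece2 : IntervalIntegrable (fun τ => (s - τ) ^ (γ - 1) • C τ y) volume ε s := by
      apply ContinuousOn.intervalIntegrable
      rw [Set.uIcc_of_le hεs.le]
      refine (hχ.continuousOn).smul ((hC.strongCont y).mono ?_)
      intro τ hτ
      exact lt_of_lt_of_le hε0 hτ.1
    have hpiece1 : IntervalIntegrable (fun τ => (s - τ) ^ (γ - 1) • C τ y) volume 0 ε := by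
      rw [intervalIntegrable_iff_integrableOn_Ioc_of_le hε0.le]
      have hmaj : IntegrableOn (fun τ : ℝ => s ^ (γ - 1) * M * τ ^ (β - 2)) (Set.Ioc 0 ε) := by
        have h1 : IntervalIntegrable (fun τ : ℝ => τ ^ (β - 2)) volume 0 ε :=
          intervalIntegral.intervalIntegrable_rpow' hβm
        rw [intervalIntegrable_iff_integrableOn_Ioc_of_le hε0.le] at h1
        exact h1.const_mul _
      refine Integrable.mono' hmaj ?_ ?_
      · refine ContinuousOn.aestronglyMeasurable ?_ measurableSet_Ioc
        refine (hχ.continuousOn).smul ((hC.strongCont y).mono ?_)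
        intro τ hτ
        exact hτ.1
      · refine (ae_restrict_iff' measurableSet_Ioc).2 (Eventually.of_forall fun τ hτ => ?_)
        have hτs : 0 < s - τ := by
          have := hτ.2; have := hεs; linarith [hτ.2]
        rw [norm_smul, Real.norm_eq_abs, abs_of_pos (Real.rpow_pos_of_pos hτs _)]
        have h2 : (s - τ) ^ (γ - 1) ≤ s ^ (γ - 1) :=
          Real.rpow_le_rpow hτs.le (by linarith [hτ.1]) (by linarith)
        have h3 : ‖C τ y‖ ≤ M * τ ^ (β - 2) := hM τ ⟨hτ.1, lt_of_le_of_lt hτ.2 hεε⟩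
        calc (s - τ) ^ (γ - 1) * ‖C τ y‖ ≤ s ^ (γ - 1) * (M * τ ^ (β - 2)) := by
              refine mul_le_mul h2 h3 (norm_nonneg _) (Real.rpow_nonneg hs.le _)
          _ = s ^ (γ - 1) * M * τ ^ (β - 2) := by ring
    exact hpiece1.trans hpiece2
  -- Laplace transforms of the RL integral
  have convl := conv_laplace hγ0 hl0 (fun τ => C τ x) (hint l hll x)
  have convμ := conv_laplace hγ0 hμ0 (fun τ => C τ x) (hint μ hlμ x)
  obtain ⟨cl, hcl0, hcl⟩ := laplace_norm_bound C hC.strongCont l hl0 (hint l hll)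
  set RL : ℝ → X := fun s => RLv γ (fun τ => C τ x) s with hRL
  have hRLmeas : AEStronglyMeasurable RL ν := by
    have h1 := convμ.1.aestronglyMeasurable
    have h2 : AEStronglyMeasurable
        (fun s => Real.exp (μ * s) • (Real.exp (-μ * s) • RL s)) ν :=
      ((Real.continuous_exp.comp (continuous_const.mul continuous_id)).aestronglyMeasurable).smul h1
    refine h2.congr (Eventually.of_forall fun s => ?_)
    show Real.exp (μ * s) • Real.exp (-μ * s) • RL s = RL s
    rw [smul_smul, ← Real.exp_add, show μ * s + -μ * s = 0 by ring, Real.exp_zero, one_smul]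
  -- commuting `C t` past the RL integral
  have hBrw : ∀ t s : ℝ, 0 < t → 0 < s →
      RLv γ (fun τ => C τ (C t x)) s = C t (RL s) := by
    intro t s ht hs
    simp only [hRL, RLv, _root_.map_smul]
    congr 1
    rw [← (C t).intervalIntegral_comp_comm (hII x s hs)]
    refine intervalIntegral.integral_congr_ae ?_
    refine Eventually.of_forall fun τ hτ => ?_
    rw [Set.uIoc_of_le hs.le] at hτ
    rw [_root_.map_smul, hC.comm τ t hτ.1 ht x]
  set Rl : X := ∫ t in Set.Ioi (0:ℝ), Real.exp (-l * t) • C t x with hRl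
  set Rμ : X := ∫ t in Set.Ioi (0:ℝ), Real.exp (-μ * t) • C t x with hRμ
  set D : X := ∫ s in Set.Ioi (0:ℝ), Real.exp (-μ * s) • C s Rl with hD
  -- The Laplace transform (in t) of the functional equation, for fixed s.
  have hG2 : (∫ t in Set.Ioi (0:ℝ), Real.exp (-l * t) * t ^ (β - 2))
      = Real.Gamma (β - 1) * l ^ (-(β - 1)) := by
    have := exp_rpow_integral hβ1' hl0
    rwa [show β - 1 - 1 = β - 2 by ring] at this
  have hG2μ : (∫ s in Set.Ioi (0:ℝ), Real.exp (-μ * s) * s ^ (β - 2))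
      = Real.Gamma (β - 1) * μ ^ (-(β - 1)) := by
    have := exp_rpow_integral hβ1' hμ0
    rwa [show β - 1 - 1 = β - 2 by ring] at this
  have starstar : ∀ s : ℝ, 0 < s →
      C s (l ^ (-γ) • Rl) - (∫ t in Set.Ioi (0:ℝ), Real.exp (-l * t) • C t (RL s))
      = (s ^ (β - 2) / Real.Gamma (β - 1)) • (l ^ (-γ) • Rl)
        - l ^ (-(β - 1)) • RL s := by
    intro s hs
    have hIA : IntegrableOn (fun t => Real.exp (-l * t) • C s (RL t)) (Set.Ioi 0) := by
      refine IntegrableOn.congr_fun ((C s).integrable_comp convl.1) (fun t _ => ?_)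
        measurableSet_Ioi
      rw [_root_.map_smul]
    have hIB : IntegrableOn (fun t => Real.exp (-l * t) • C t (RL s)) (Set.Ioi 0) :=
      hint l hll _
    have hID : IntegrableOn
        (fun t => Real.exp (-l * t) • ((s ^ (β - 2) / Real.Gamma (β - 1)) • RL t))
        (Set.Ioi 0) := by
      refine IntegrableOn.congr_fun (convl.1.smul (s ^ (β - 2) / Real.Gamma (β - 1)))
        (fun t _ => ?_) measurableSet_Ioi
      simp only [Pi.smul_apply]
      rw [smul_comm]
    have hIE : IntegrableOn
        (fun t => Real.exp (-l * t) • ((t ^ (β - 2) / Real.Gamma (β - 1)) • RL s))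
        (Set.Ioi 0) := by
      have h1 : IntegrableOn (fun t : ℝ => Real.exp (-l * t) * t ^ (β - 2) / Real.Gamma (β - 1))
          (Set.Ioi 0) := (exp_rpow_integrableOn hβm hl0).div_const _
      refine IntegrableOn.congr_fun (h1.smul_const (RL s)) (fun t _ => ?_) measurableSet_Ioi
      rw [smul_smul, mul_div_assoc]
    have hpt : ∀ t ∈ Set.Ioi (0:ℝ),
        Real.exp (-l * t) • C s (RL t) - Real.exp (-l * t) • C t (RL s)
        = Real.exp (-l * t) • ((s ^ (β - 2) / Real.Gamma (β - 1)) • RL t)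
          - Real.exp (-l * t) • ((t ^ (β - 2) / Real.Gamma (β - 1)) • RL s) := by
      intro t ht
      rw [← smul_sub, ← smul_sub]
      congr 1
      have hfe := hC.funEq t s ht hs x
      rw [← hβ] at hfe
      rw [hBrw t s ht hs] at hfe
      exact hfe
    have hInt : ∫ t in Set.Ioi (0:ℝ),
          (Real.exp (-l * t) • C s (RL t) - Real.exp (-l * t) • C t (RL s))
        = ∫ t in Set.Ioi (0:ℝ),
          (Real.exp (-l * t) • ((s ^ (β - 2) / Real.Gamma (β - 1)) • RL t)
            - Real.exp (-l * t) • ((t ^ (β - 2) / Real.Gamma (β - 1)) • RL s)) :=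
      setIntegral_congr_fun measurableSet_Ioi hpt
    rw [integral_sub hIA hIB, integral_sub hID hIE] at hInt
    have hA : ∫ t in Set.Ioi (0:ℝ), Real.exp (-l * t) • C s (RL t) = C s (l ^ (-γ) • Rl) := by
      rw [show l ^ (-γ) • Rl = ∫ t in Set.Ioi (0:ℝ), Real.exp (-l * t) • RL t from convl.2.symm,
        ← (C s).integral_comp_comm convl.1]
      refine setIntegral_congr_fun measurableSet_Ioi (fun t _ => ?_)
      rw [_root_.map_smul]
    have hDv : ∫ t in Set.Ioi (0:ℝ),
        Real.exp (-l * t) • ((s ^ (β - 2) / Real.Gamma (β - 1)) • RL t)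
        = (s ^ (β - 2) / Real.Gamma (β - 1)) • (l ^ (-γ) • Rl) := by
      rw [show l ^ (-γ) • Rl = ∫ t in Set.Ioi (0:ℝ), Real.exp (-l * t) • RL t from convl.2.symm,
        ← integral_smul]
      refine setIntegral_congr_fun measurableSet_Ioi (fun t _ => ?_)
      rw [smul_comm]
    have hEv : ∫ t in Set.Ioi (0:ℝ),
        Real.exp (-l * t) • ((t ^ (β - 2) / Real.Gamma (β - 1)) • RL s)
        = l ^ (-(β - 1)) • RL s := by
      calc ∫ t in Set.Ioi (0:ℝ), Real.exp (-l * t) • ((t ^ (β - 2) / Real.Gamma (β - 1)) • RL s)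
          = ∫ t in Set.Ioi (0:ℝ), (Real.exp (-l * t) * t ^ (β - 2) / Real.Gamma (β - 1)) • RL s := by
            refine setIntegral_congr_fun measurableSet_Ioi (fun t _ => ?_)
            rw [smul_smul, mul_div_assoc]
        _ = (∫ t in Set.Ioi (0:ℝ), Real.exp (-l * t) * t ^ (β - 2) / Real.Gamma (β - 1)) • RL s :=
            integral_smul_const _ _
        _ = l ^ (-(β - 1)) • RL s := by
            rw [integral_div, hG2]
            congr 1
            field_simp
    rw [hA, hDv, hEv] at hInt
    exact hInt
  -- Fubini for the mixed term
  set G : ℝ × ℝ → X := fun p => (Real.exp (-l * p.1) * Real.exp (-μ * p.2)) • C p.1 (RL p.2)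
    with hGdef
  have hGaesm : AEStronglyMeasurable G (ν.prod ν) := by
    have hsc : Continuous (fun p : ℝ × ℝ => Real.exp (-l * p.1) * Real.exp (-μ * p.2)) := by
      fun_prop
    have hF := jointAESM (fun t s => C t (RL s)) (fun s => hC.strongCont (RL s))
      (fun u _ => (C u).continuous.comp_aestronglyMeasurable hRLmeas)
    exact (hsc.aestronglyMeasurable).smul hF
  have hGint : Integrable G (ν.prod ν) := by
    rw [integrable_prod_iff' hGaesm]
    constructor
    · refine Eventually.of_forall (fun s => ?_)
      refine Integrable.congr ((hint l hll (RL s)).smul (Real.exp (-μ * s)))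
        (Eventually.of_forall fun t => ?_)
      simp only [Pi.smul_apply, hGdef]
      rw [smul_smul, mul_comm]
    · have hmaj : Integrable (fun s => cl * (Real.exp (-μ * s) * ‖RL s‖)) ν := by
        refine Integrable.const_mul
          (IntegrableOn.congr_fun convμ.1.norm (fun s _ => ?_) measurableSet_Ioi) cl
        rw [norm_smul, Real.norm_eq_abs, abs_of_pos (Real.exp_pos _)]
      refine Integrable.mono' hmaj (hGaesm.prod_swap.norm.integral_prod_right') ?_
      refine (ae_restrict_iff' measurableSet_Ioi).2 (Eventually.of_forall fun s hs => ?_)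
      have hnn : 0 ≤ ∫ t, ‖G (t, s)‖ ∂ν := integral_nonneg (fun t => norm_nonneg _)
      rw [Real.norm_of_nonneg hnn]
      have heq : ∀ t ∈ Set.Ioi (0:ℝ),
          ‖G (t, s)‖ = Real.exp (-μ * s) * (Real.exp (-l * t) * ‖C t (RL s)‖) := by
        intro t _
        simp only [hGdef]
        rw [norm_smul, Real.norm_eq_abs, abs_of_pos (by positivity)]
        ring
      calc ∫ t, ‖G (t, s)‖ ∂ν
          = ∫ t in Set.Ioi (0:ℝ), Real.exp (-μ * s) * (Real.exp (-l * t) * ‖C t (RL s)‖) :=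
            setIntegral_congr_fun measurableSet_Ioi heq
        _ = Real.exp (-μ * s) * ∫ t in Set.Ioi (0:ℝ), Real.exp (-l * t) * ‖C t (RL s)‖ :=
            integral_const_mul _ _
        _ ≤ Real.exp (-μ * s) * (cl * ‖RL s‖) :=
            mul_le_mul_of_nonneg_left (hcl (RL s)) (Real.exp_pos _).le
        _ = cl * (Real.exp (-μ * s) * ‖RL s‖) := by ring
  have hQint : IntegrableOn
      (fun s => Real.exp (-μ * s) • ∫ t in Set.Ioi (0:ℝ), Real.exp (-l * t) • C t (RL s))
      (Set.Ioi 0) := by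
    refine IntegrableOn.congr_fun hGint.integral_prod_right (fun s _ => ?_) measurableSet_Ioi
    rw [← integral_smul]
    refine setIntegral_congr_fun measurableSet_Ioi (fun t _ => ?_)
    simp only [hGdef]
    rw [smul_smul, mul_comm]
  have hswap := integral_integral_swap (f := fun t s => G (t, s)) (μ := ν) (ν := ν)
    (by exact hGint)
  have hQval : (∫ s in Set.Ioi (0:ℝ),
        Real.exp (-μ * s) • ∫ t in Set.Ioi (0:ℝ), Real.exp (-l * t) • C t (RL s))
      = μ ^ (-γ) • ∫ t in Set.Ioi (0:ℝ), Real.exp (-l * t) • C t Rμ := by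
    have hL : (∫ t, (∫ s, G (t, s) ∂ν) ∂ν)
        = μ ^ (-γ) • ∫ t in Set.Ioi (0:ℝ), Real.exp (-l * t) • C t Rμ := by
      rw [← integral_smul]
      refine setIntegral_congr_fun measurableSet_Ioi (fun t _ => ?_)
      have h1 : (∫ s, G (t, s) ∂ν)
          = Real.exp (-l * t) • ∫ s in Set.Ioi (0:ℝ), Real.exp (-μ * s) • C t (RL s) := by
        rw [← integral_smul]
        refine setIntegral_congr_fun measurableSet_Ioi (fun s _ => ?_)
        simp only [hGdef]
        rw [smul_smul]
      have h2 : (∫ s in Set.Ioi (0:ℝ), Real.exp (-μ * s) • C t (RL s))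
          = C t (μ ^ (-γ) • Rμ) := by
        rw [show μ ^ (-γ) • Rμ = ∫ s in Set.Ioi (0:ℝ), Real.exp (-μ * s) • RL s
            from convμ.2.symm, ← (C t).integral_comp_comm convμ.1]
        refine setIntegral_congr_fun measurableSet_Ioi (fun s _ => ?_)
        rw [_root_.map_smul]
      rw [h1, h2, _root_.map_smul, smul_comm]
    have hR : (∫ s, (∫ t, G (t, s) ∂ν) ∂ν)
        = ∫ s in Set.Ioi (0:ℝ),
            Real.exp (-μ * s) • ∫ t in Set.Ioi (0:ℝ), Real.exp (-l * t) • C t (RL s) := by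
      refine setIntegral_congr_fun measurableSet_Ioi (fun s _ => ?_)
      rw [← integral_smul]
      refine setIntegral_congr_fun measurableSet_Ioi (fun t _ => ?_)
      simp only [hGdef]
      rw [smul_smul, mul_comm]
    rw [← hR, ← hswap]
    exact hL
  -- integrate the starstar identity in s
  have hgA : IntegrableOn (fun s => Real.exp (-μ * s) • C s (l ^ (-γ) • Rl)) (Set.Ioi 0) :=
    hint μ hlμ _
  have hgD : IntegrableOn
      (fun s => Real.exp (-μ * s) • ((s ^ (β - 2) / Real.Gamma (β - 1)) • (l ^ (-γ) • Rl)))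
      (Set.Ioi 0) := by
    have h1 : IntegrableOn (fun s : ℝ => Real.exp (-μ * s) * s ^ (β - 2) / Real.Gamma (β - 1))
        (Set.Ioi 0) := (exp_rpow_integrableOn hβm hμ0).div_const _
    refine IntegrableOn.congr_fun (h1.smul_const (l ^ (-γ) • Rl)) (fun s _ => ?_)
      measurableSet_Ioi
    simp only [smul_smul]
    congr 1
    ring
  have hgE : IntegrableOn (fun s => Real.exp (-μ * s) • (l ^ (-(β - 1)) • RL s))
      (Set.Ioi 0) := by
    refine IntegrableOn.congr_fun (convμ.1.smul (l ^ (-(β - 1)))) (fun s _ => ?_)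
      measurableSet_Ioi
    simp only [Pi.smul_apply]
    rw [smul_comm]
  have hstep2 : ∫ s in Set.Ioi (0:ℝ),
        (Real.exp (-μ * s) • C s (l ^ (-γ) • Rl)
          - Real.exp (-μ * s) • ∫ t in Set.Ioi (0:ℝ), Real.exp (-l * t) • C t (RL s))
      = ∫ s in Set.Ioi (0:ℝ),
        (Real.exp (-μ * s) • ((s ^ (β - 2) / Real.Gamma (β - 1)) • (l ^ (-γ) • Rl))
          - Real.exp (-μ * s) • (l ^ (-(β - 1)) • RL s)) := by
    refine setIntegral_congr_fun measurableSet_Ioi (fun s hs => ?_)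
    rw [← smul_sub, ← smul_sub]
    congr 1
    exact starstar s hs
  rw [integral_sub hgA hQint, integral_sub hgD hgE] at hstep2
  have hT1 : (∫ s in Set.Ioi (0:ℝ), Real.exp (-μ * s) • C s (l ^ (-γ) • Rl))
      = l ^ (-γ) • D := by
    rw [hD, ← integral_smul (l ^ (-γ)) (fun s => Real.exp (-μ * s) • C s Rl)]
    refine setIntegral_congr_fun measurableSet_Ioi (fun s _ => ?_)
    rw [_root_.map_smul, smul_comm]
  have hT3 : (∫ s in Set.Ioi (0:ℝ),
        Real.exp (-μ * s) • ((s ^ (β - 2) / Real.Gamma (β - 1)) • (l ^ (-γ) • Rl)))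
      = μ ^ (-(β - 1)) • (l ^ (-γ) • Rl) := by
    calc ∫ s in Set.Ioi (0:ℝ),
          Real.exp (-μ * s) • ((s ^ (β - 2) / Real.Gamma (β - 1)) • (l ^ (-γ) • Rl))
        = ∫ s in Set.Ioi (0:ℝ),
            (Real.exp (-μ * s) * s ^ (β - 2) / Real.Gamma (β - 1)) • (l ^ (-γ) • Rl) := by
          refine setIntegral_congr_fun measurableSet_Ioi (fun s _ => ?_)
          rw [smul_smul, mul_div_assoc]
      _ = (∫ s in Set.Ioi (0:ℝ), Real.exp (-μ * s) * s ^ (β - 2) / Real.Gamma (β - 1)) •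
            (l ^ (-γ) • Rl) := integral_smul_const _ _
      _ = μ ^ (-(β - 1)) • (l ^ (-γ) • Rl) := by
          rw [integral_div, hG2μ]
          congr 1
          field_simp
  have hT4 : (∫ s in Set.Ioi (0:ℝ), Real.exp (-μ * s) • (l ^ (-(β - 1)) • RL s))
      = l ^ (-(β - 1)) • (μ ^ (-γ) • Rμ) := by
    rw [show μ ^ (-γ) • Rμ = ∫ s in Set.Ioi (0:ℝ), Real.exp (-μ * s) • RL s from convμ.2.symm,
      ← integral_smul]
    refine setIntegral_congr_fun measurableSet_Ioi (fun s _ => ?_)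
    rw [smul_comm]
  -- commutation of the two resolvent-type integrals
  set H : ℝ × ℝ → X := fun p => (Real.exp (-l * p.1) * Real.exp (-μ * p.2)) • C p.1 (C p.2 x)
    with hHdef
  have hHaesm : AEStronglyMeasurable H (ν.prod ν) := by
    have hsc : Continuous (fun p : ℝ × ℝ => Real.exp (-l * p.1) * Real.exp (-μ * p.2)) := by
      fun_prop
    have hF := jointAESM (fun t s => C t (C s x)) (fun s => hC.strongCont (C s x))
      (fun u _ => (C u).continuous.comp_aestronglyMeasurable (hmeasC x))
    exact (hsc.aestronglyMeasurable).smul hF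
  have hHint : Integrable H (ν.prod ν) := by
    rw [integrable_prod_iff' hHaesm]
    constructor
    · refine Eventually.of_forall (fun s => ?_)
      refine Integrable.congr ((hint l hll (C s x)).smul (Real.exp (-μ * s)))
        (Eventually.of_forall fun t => ?_)
      simp only [Pi.smul_apply, hHdef]
      rw [smul_smul, mul_comm]
    · have hmaj : Integrable (fun s => cl * (Real.exp (-μ * s) * ‖C s x‖)) ν := by
        refine Integrable.const_mul
          (IntegrableOn.congr_fun (hint μ hlμ x).norm (fun s _ => ?_) measurableSet_Ioi) cl
        rw [norm_smul, Real.norm_eq_abs, abs_of_pos (Real.exp_pos _)]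
      refine Integrable.mono' hmaj (hHaesm.prod_swap.norm.integral_prod_right') ?_
      refine (ae_restrict_iff' measurableSet_Ioi).2 (Eventually.of_forall fun s hs => ?_)
      have hnn : 0 ≤ ∫ t, ‖H (t, s)‖ ∂ν := integral_nonneg (fun t => norm_nonneg _)
      rw [Real.norm_of_nonneg hnn]
      have heq : ∀ t ∈ Set.Ioi (0:ℝ),
          ‖H (t, s)‖ = Real.exp (-μ * s) * (Real.exp (-l * t) * ‖C t (C s x)‖) := by
        intro t _
        simp only [hHdef]
        rw [norm_smul, Real.norm_eq_abs, abs_of_pos (by positivity)]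
        ring
      calc ∫ t, ‖H (t, s)‖ ∂ν
          = ∫ t in Set.Ioi (0:ℝ), Real.exp (-μ * s) * (Real.exp (-l * t) * ‖C t (C s x)‖) :=
            setIntegral_congr_fun measurableSet_Ioi heq
        _ = Real.exp (-μ * s) * ∫ t in Set.Ioi (0:ℝ), Real.exp (-l * t) * ‖C t (C s x)‖ :=
            integral_const_mul _ _
        _ ≤ Real.exp (-μ * s) * (cl * ‖C s x‖) :=
            mul_le_mul_of_nonneg_left (hcl (C s x)) (Real.exp_pos _).le
        _ = cl * (Real.exp (-μ * s) * ‖C s x‖) := by ring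
  have hswapH := integral_integral_swap (f := fun t s => H (t, s)) (μ := ν) (ν := ν)
    (by exact hHint)
  have hDD : (∫ t in Set.Ioi (0:ℝ), Real.exp (-l * t) • C t Rμ) = D := by
    have hL : (∫ t, (∫ s, H (t, s) ∂ν) ∂ν)
        = ∫ t in Set.Ioi (0:ℝ), Real.exp (-l * t) • C t Rμ := by
      refine setIntegral_congr_fun measurableSet_Ioi (fun t _ => ?_)
      have h1 : (∫ s, H (t, s) ∂ν)
          = Real.exp (-l * t) • ∫ s in Set.Ioi (0:ℝ), Real.exp (-μ * s) • C t (C s x) := by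
        rw [← integral_smul]
        refine setIntegral_congr_fun measurableSet_Ioi (fun s _ => ?_)
        simp only [hHdef]
        rw [smul_smul]
      have h2 : (∫ s in Set.Ioi (0:ℝ), Real.exp (-μ * s) • C t (C s x)) = C t Rμ := by
        rw [hRμ, ← (C t).integral_comp_comm (hint μ hlμ x)]
        refine setIntegral_congr_fun measurableSet_Ioi (fun s _ => ?_)
        rw [_root_.map_smul]
      rw [h1, h2]
    have hRr : (∫ s, (∫ t, H (t, s) ∂ν) ∂ν) = D := by
      rw [hD]
      refine setIntegral_congr_fun measurableSet_Ioi (fun s hs => ?_)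
      have h1 : (∫ t, H (t, s) ∂ν)
          = Real.exp (-μ * s) • ∫ t in Set.Ioi (0:ℝ), Real.exp (-l * t) • C s (C t x) := by
        rw [← integral_smul]
        refine setIntegral_congr_fun measurableSet_Ioi (fun t ht => ?_)
        simp only [hHdef]
        rw [hC.comm t s ht hs x, smul_smul, mul_comm]
      have h2 : (∫ t in Set.Ioi (0:ℝ), Real.exp (-l * t) • C s (C t x)) = C s Rl := by
        rw [hRl, ← (C s).integral_comp_comm (hint l hll x)]
        refine setIntegral_congr_fun measurableSet_Ioi (fun t _ => ?_)
        rw [_root_.map_smul]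
      rw [h1, h2]
    rw [← hL, hswapH, hRr]
  rw [hT1, hQval, hT3, hT4, hDD] at hstep2
  -- final algebra
  have heq2 := congrArg (fun z : X => (l ^ γ * μ ^ γ) • z) hstep2
  simp only [smul_sub, smul_smul] at heq2
  rw [show l ^ γ * μ ^ γ * l ^ (-γ) = μ ^ γ by
      rw [mul_right_comm, ← Real.rpow_add hl0, show γ + -γ = 0 by ring, Real.rpow_zero, one_mul],
    show l ^ γ * μ ^ γ * μ ^ (-γ) = l ^ γ by
      rw [mul_assoc, ← Real.rpow_add hμ0, show γ + -γ = 0 by ring, Real.rpow_zero, mul_one],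
    show l ^ γ * μ ^ γ * (μ ^ (-(β - 1)) * l ^ (-γ)) = μ ^ (γ + 1 - β) by
      rw [show l ^ γ * μ ^ γ * (μ ^ (-(β - 1)) * l ^ (-γ))
          = (l ^ γ * l ^ (-γ)) * (μ ^ γ * μ ^ (-(β - 1))) by ring,
        ← Real.rpow_add hl0, ← Real.rpow_add hμ0, show γ + -γ = 0 by ring, Real.rpow_zero,
        one_mul, show γ + -(β - 1) = γ + 1 - β by ring],
    show l ^ γ * μ ^ γ * (l ^ (-(β - 1)) * μ ^ (-γ)) = l ^ (γ + 1 - β) by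
      rw [show l ^ γ * μ ^ γ * (l ^ (-(β - 1)) * μ ^ (-γ))
          = (μ ^ γ * μ ^ (-γ)) * (l ^ γ * l ^ (-(β - 1))) by ring,
        ← Real.rpow_add hμ0, ← Real.rpow_add hl0, show γ + -γ = 0 by ring, Real.rpow_zero,
        one_mul, show γ + -(β - 1) = γ + 1 - β by ring]] at heq2
  have h8 := congrArg (fun z : X => -z) heq2
  simp only [neg_sub] at h8
  rw [show (1:ℝ) - δ * (2 - γ) = γ + 1 - β by rw [hβ]; ring, sub_smul]
  exact h8.symm
end

section
/- Let γ ∈ (1,2), δ ∈ [0,1], T > 0, M, k > 0. Then the sequence a_n = (4kM)^n T^{nγ} Γ(γ)^n Γ(γ+δ(2−γ)−1) / Γ((n+1)γ + δ(2−γ) − 1) converges to 0 as n → ∞; in particular there exists n₀ with a_{n₀} < 1. -/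
open Filter Topology

theorem stmt18 (γ δ T M k : ℝ) (hγ1 : 1 < γ) (hγ2 : γ < 2) (hδ0 : 0 ≤ δ) (hδ1 : δ ≤ 1)
    (hT : 0 < T) (hM : 0 < M) (hk : 0 < k) :
    Filter.Tendsto
      (fun n : ℕ => (4 * k * M) ^ n * T ^ (n * γ : ℝ) * Real.Gamma γ ^ n *
        Real.Gamma (γ + δ * (2 - γ) - 1) / Real.Gamma ((n + 1) * γ + δ * (2 - γ) - 1))
      Filter.atTop (𝓝 0) ∧
    ∃ n₀ : ℕ, (4 * k * M) ^ n₀ * T ^ (n₀ * γ : ℝ) * Real.Gamma γ ^ n₀ *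
        Real.Gamma (γ + δ * (2 - γ) - 1) / Real.Gamma ((n₀ + 1) * γ + δ * (2 - γ) - 1) < 1 := by
  set c : ℝ := γ + δ * (2 - γ) - 1 with hc
  have hc0 : 0 < c := by
    have : 0 ≤ δ * (2 - γ) := mul_nonneg hδ0 (by linarith)
    simp only [hc]; linarith
  have hΓγ : 0 < Real.Gamma γ := Real.Gamma_pos_of_pos (by linarith)
  have hΓc : 0 < Real.Gamma c := Real.Gamma_pos_of_pos hc0
  set B : ℝ := 4 * k * M * T ^ (γ : ℝ) * Real.Gamma γ with hB
  have hB0 : 0 < B := by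
    have := Real.rpow_pos_of_pos hT γ
    positivity
  set f : ℕ → ℝ := fun n : ℕ => (4 * k * M) ^ n * T ^ (n * γ : ℝ) * Real.Gamma γ ^ n *
        Real.Gamma c / Real.Gamma ((n + 1) * γ + δ * (2 - γ) - 1) with hf
  have hfeq : ∀ n : ℕ, f n = B ^ n * Real.Gamma c / Real.Gamma ((n : ℝ) * γ + c) := by
    intro n
    have hT' : T ^ ((n : ℝ) * γ) = (T ^ (γ : ℝ)) ^ n := by
      rw [← Real.rpow_natCast (T ^ (γ : ℝ)) n, ← Real.rpow_mul hT.le, mul_comm]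
    have harg : ((n : ℝ) + 1) * γ + δ * (2 - γ) - 1 = (n : ℝ) * γ + c := by
      simp only [hc]; ring
    simp only [hf, hB, harg, hT', mul_pow]
  -- main tendsto
  have key : Tendsto f atTop (𝓝 0) := by
    have hΓpos : ∀ n : ℕ, 0 < Real.Gamma ((n : ℝ) * γ + c) := by
      intro n
      refine Real.Gamma_pos_of_pos ?_
      have : (0:ℝ) ≤ (n : ℝ) * γ := mul_nonneg (Nat.cast_nonneg n) (by linarith)
      linarith
    have hg : Tendsto (fun n : ℕ => Real.Gamma c * (1 / B) * (B ^ (n + 1) / (Nat.factorial (n + 1) : ℝ))) atTop (𝓝 0) := by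
      have h1 : Tendsto (fun n : ℕ => B ^ n / Nat.factorial n) atTop (𝓝 0) :=
        FloorSemiring.tendsto_pow_div_factorial_atTop B
      have h2 := h1.comp (tendsto_add_atTop_nat 1)
      have := h2.const_mul (Real.Gamma c * (1 / B))
      simpa using this
    refine squeeze_zero' ?_ ?_ hg
    · filter_upwards with n
      rw [hfeq n]
      exact div_nonneg (by positivity) (hΓpos n).le
    · have hN : ∀ᶠ n : ℕ in atTop, (2 - c) / (γ - 1) ≤ (n : ℝ) := by
        obtain ⟨N, hNge⟩ := exists_nat_ge ((2 - c) / (γ - 1))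
        filter_upwards [eventually_ge_atTop N] with n hn
        exact hNge.trans (by exact_mod_cast hn)
      filter_upwards [hN] with n hn
      have hge : (n : ℝ) + 2 ≤ (n : ℝ) * γ + c := by
        have hγ1' : (0:ℝ) < γ - 1 := by linarith
        have := (div_le_iff₀ hγ1').mp hn
        nlinarith
      have hn0 : (0:ℝ) ≤ (n : ℝ) := Nat.cast_nonneg n
      have hmem1 : ((n : ℝ) + 2) ∈ Set.Ici (2:ℝ) := by
        simp only [Set.mem_Ici]; linarith
      have hmem2 : ((n : ℝ) * γ + c) ∈ Set.Ici (2:ℝ) := by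
        simp only [Set.mem_Ici]; linarith
      have hmono : Real.Gamma ((n : ℝ) + 2) ≤ Real.Gamma ((n : ℝ) * γ + c) :=
        Real.Gamma_strictMonoOn_Ici.monotoneOn hmem1 hmem2 hge
      have hfact : Real.Gamma ((n : ℝ) + 2) = Nat.factorial (n + 1) := by
        have := Real.Gamma_nat_eq_factorial (n + 1)
        rw [← this]; push_cast; ring_nf
      rw [hfeq n]
      have hrhs : Real.Gamma c * (1 / B) * (B ^ (n + 1) / Nat.factorial (n + 1)) =
          B ^ n * Real.Gamma c / (Nat.factorial (n + 1) : ℝ) := by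
        field_simp
        ring
      rw [hrhs]
      apply div_le_div_of_nonneg_left (by positivity) ?_ ?_
      · rw [← hfact]; exact Real.Gamma_pos_of_pos (by positivity)
      · rw [← hfact]; exact hmono
  refine ⟨key, ?_⟩
  have := key.eventually_lt_const (show (0:ℝ) < 1 by norm_num)
  exact this.exists
end
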